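/- Let r ≥ 1 and n ≥ r − 1 be integers and f : ℝ² → ℝ any function. For all reals u, v with r − 1 < u < n + 1 and r − 1 < v < n + 1, the function p ↦ Σ_{i=0}^{n} Σ_{j=0}^{n} B_{0,r}(u − i)·B_{0,r}(v − j)·(p − f(i,j))² of the real variable p has a unique minimizer p* ∈ ℝ, and p* equals the tensor-product B-spline surface value Σ_{i=0}^{n} Σ_{j=0}^{n} B_{i,r}(u)·B_{j,r}(v)·f(i,j); that is, every uniform B-spline surface of order r is, at each parameter point, the minimizer of a positive quadratic moving least-squares error with product weights. -/

import Mathlib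

/-- Uniform B-spline basis functions `B i j` with integer knots `tᵢ = i`,
defined by the Cox–de Boor recursion. -/
noncomputable def B : ℕ → ℕ → ℝ → ℝ
  | _, 0, _ => 0
  | i, 1, t => if (i : ℝ) ≤ t ∧ t < (i : ℝ) + 1 then 1 else 0
  | i, (j+2), t =>
      ((t - (i : ℝ)) / ((j : ℝ) + 1)) * B i (j+1) t
        + (((i : ℝ) + ((j : ℝ) + 2) - t) / ((j : ℝ) + 1)) * B (i+1) (j+1) t

lemma B_shift : ∀ (j i : ℕ) (t : ℝ), B i j t = B 0 j (t - i) := by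
  intro j
  induction j with
  | zero => intro i t; simp [B]
  | succ k ih =>
    cases k with
    | zero =>
      intro i t
      simp only [B]
      refine if_congr ?_ rfl rfl
      push_cast
      constructor <;> rintro ⟨h1, h2⟩ <;> constructor <;> linarith
    | succ m =>
      intro i t
      simp only [B]
      rw [ih i t, ih (i+1) t]
      have h1 : t - ((i+1 : ℕ) : ℝ) = (t - i) - ((1:ℕ):ℝ) := by push_cast; ring
      have h2 : B 1 (m+1) (t - i) = B 0 (m+1) ((t - i) - ((1:ℕ):ℝ)) := ih 1 (t - i)
      rw [h1, ← h2]
      push_cast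
      ring

lemma B_support : ∀ (j i : ℕ) (t : ℝ), (t < i ∨ (i:ℝ) + j ≤ t) → B i j t = 0 := by
  intro j
  induction j with
  | zero => intro i t _; simp [B]
  | succ k ih =>
    cases k with
    | zero =>
      intro i t h
      simp only [B]
      rw [if_neg]
      rintro ⟨h1, h2⟩
      push_cast at h
      rcases h with h | h <;> linarith
    | succ m =>
      intro i t h
      simp only [B]
      rw [ih i t, ih (i+1) t]
      · ring
      · push_cast at h ⊢
        rcases h with h | h
        · left; linarith
        · right; linarith
      · push_cast at h ⊢
        rcases h with h | h
        · left; linarith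
        · right; linarith

lemma B_nonneg : ∀ (j i : ℕ) (t : ℝ), 0 ≤ B i j t := by
  intro j
  induction j with
  | zero => intro i t; simp [B]
  | succ k ih =>
    cases k with
    | zero =>
      intro i t
      simp only [B]
      split_ifs <;> norm_num
    | succ m =>
      intro i t
      simp only [B]
      by_cases hti : t < i
      · rw [B_support _ i t (Or.inl hti), B_support _ (i+1) t (Or.inl (by push_cast; linarith))]
        ring_nf
        norm_num
      · push_neg at hti
        apply add_nonneg
        · apply mul_nonneg
          · apply div_nonneg <;> [linarith; positivity]
          · exact ih i t
        · by_cases ht2 : (i:ℝ) + ((m:ℝ) + 2) - t < 0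
          · rw [B_support _ (i+1) t (Or.inr (by push_cast; linarith))]
            ring_nf
            nlinarith [ih (i+1) t]
          · push_neg at ht2
            apply mul_nonneg
            · apply div_nonneg <;> [linarith; positivity]
            · exact ih (i+1) t

lemma B_partition (n : ℕ) (t : ℝ) :
    ∀ r : ℕ, 1 ≤ r → (r:ℝ) - 1 < t → t < (n:ℝ) + 1 →
      ∑ i ∈ Finset.range (n+1), B i r t = 1 := by
  intro r
  induction r with
  | zero => intro h; omega
  | succ k ih =>
    cases k with
    | zero =>
      intro _ h1 h2
      push_cast at h1
      have ht0 : (0:ℝ) < t := by linarith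
      simp only [B]
      set k := ⌊t⌋.toNat with hkdef
      have hk0 : (0:ℤ) ≤ ⌊t⌋ := Int.floor_nonneg.mpr ht0.le
      have hkr : ((k:ℕ):ℝ) = ((⌊t⌋:ℤ):ℝ) := by
        rw [hkdef]; exact_mod_cast congrArg (fun z : ℤ => (z:ℝ)) (Int.toNat_of_nonneg hk0)
      have hk1 : (k:ℝ) ≤ t := by rw [hkr]; exact Int.floor_le t
      have hk2 : t < (k:ℝ) + 1 := by rw [hkr]; exact Int.lt_floor_add_one t
      have hfl : ⌊t⌋ < (n:ℤ) + 1 := Int.floor_lt.mpr (by push_cast; linarith)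
      have hkmem : k ∈ Finset.range (n+1) := Finset.mem_range.mpr (by omega)
      rw [Finset.sum_eq_single_of_mem k hkmem]
      · rw [if_pos ⟨hk1, hk2⟩]
      · intro i _ hne
        rw [if_neg]
        rintro ⟨h3, h4⟩
        apply hne
        have a' : i < k + 1 := by exact_mod_cast lt_of_le_of_lt h3 hk2
        have b' : k < i + 1 := by exact_mod_cast lt_of_le_of_lt hk1 h4
        omega
    | succ m =>
      intro _ h1 h2
      push_cast at h1
      have h1' : (m:ℝ) + 1 < t := by linarith
      have hB0 : B 0 (m+1) t = 0 :=
        B_support (m+1) 0 t (Or.inr (by push_cast; linarith))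
      have hBn : B (n+1) (m+1) t = 0 :=
        B_support (m+1) (n+1) t (Or.inl (by push_cast; linarith))
      have hm : (m:ℝ) + 1 ≠ 0 := by positivity
      have e3 : ∑ i ∈ Finset.range n, B (i+1) (m+1) t = 1 := by
        have := ih (by omega) (by push_cast; linarith) h2
        rw [Finset.sum_range_succ'] at this
        rw [hB0, add_zero] at this
        exact this
      calc ∑ i ∈ Finset.range (n+1), B i (m+2) t
          = ∑ i ∈ Finset.range (n+1), ((t - (i:ℝ)) / ((m:ℝ)+1) * B i (m+1) t)
            + ∑ i ∈ Finset.range (n+1),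
              (((i:ℝ) + ((m:ℝ)+2) - t) / ((m:ℝ)+1) * B (i+1) (m+1) t) := by
            rw [← Finset.sum_add_distrib]
            refine Finset.sum_congr rfl fun i _ => ?_
            simp [B]
        _ = ∑ i ∈ Finset.range n, ((t - ((i+1:ℕ):ℝ)) / ((m:ℝ)+1) * B (i+1) (m+1) t)
            + ∑ i ∈ Finset.range n,
              (((i:ℝ) + ((m:ℝ)+2) - t) / ((m:ℝ)+1) * B (i+1) (m+1) t) := by
            rw [Finset.sum_range_succ' (fun i => (t - (i:ℝ)) / ((m:ℝ)+1) * B i (m+1) t) n]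
            rw [Finset.sum_range_succ]
            rw [hB0, hBn]
            ring
        _ = ∑ i ∈ Finset.range n, B (i+1) (m+1) t := by
            rw [← Finset.sum_add_distrib]
            refine Finset.sum_congr rfl fun i _ => ?_
            push_cast
            field_simp
            ring
        _ = 1 := e3

/-- Every uniform B-spline surface of order `r` is, at each parameter point
`(u, v)` with `r − 1 < u, v < n + 1`, the unique minimizer of the positive
quadratic moving least-squares error with product weights
`B 0 r (u − i) · B 0 r (v − j)`: the error is uniquely minimized by the
tensor-product B-spline value `p* = ∑ᵢ ∑ⱼ B i r u · B j r v · f i j`. -/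
theorem bspline_surface_minimizes_quadratic (r n : ℕ) (hr : 1 ≤ r)
    (hn : r - 1 ≤ n) (f : ℝ → ℝ → ℝ) (u v : ℝ)
    (hu1 : (r : ℝ) - 1 < u) (hu2 : u < (n : ℝ) + 1)
    (hv1 : (r : ℝ) - 1 < v) (hv2 : v < (n : ℝ) + 1)
    (Q : ℝ → ℝ)
    (hQ : Q = fun p => ∑ i ∈ Finset.range (n + 1), ∑ j ∈ Finset.range (n + 1),
      B 0 r (u - i) * B 0 r (v - j) * (p - f i j) ^ 2)
    (pstar : ℝ)
    (hpstar : pstar = ∑ i ∈ Finset.range (n + 1), ∑ j ∈ Finset.range (n + 1),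
      B i r u * B j r v * f i j) :
    ∀ p : ℝ, p ≠ pstar → Q pstar < Q p := by
  have hQ' : ∀ q : ℝ, Q q = ∑ i ∈ Finset.range (n + 1), ∑ j ∈ Finset.range (n + 1),
      B i r u * B j r v * (q - f i j) ^ 2 := by
    intro q
    rw [hQ]
    refine Finset.sum_congr rfl fun i _ => Finset.sum_congr rfl fun j _ => ?_
    rw [← B_shift r i u, ← B_shift r j v]
  have hpu : ∑ i ∈ Finset.range (n+1), B i r u = 1 := B_partition n u r hr hu1 hu2
  have hpv : ∑ j ∈ Finset.range (n+1), B j r v = 1 := B_partition n v r hr hv1 hv2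
  have hsum : ∑ i ∈ Finset.range (n+1), ∑ j ∈ Finset.range (n+1),
      B i r u * B j r v = 1 := by
    rw [← Finset.sum_mul_sum, hpu, hpv, mul_one]
  have key : ∀ q : ℝ, Q q = q^2 - 2*q*pstar
      + ∑ i ∈ Finset.range (n+1), ∑ j ∈ Finset.range (n+1),
          B i r u * B j r v * (f i j)^2 := by
    intro q
    rw [hQ' q]
    calc ∑ i ∈ Finset.range (n+1), ∑ j ∈ Finset.range (n+1),
          B i r u * B j r v * (q - f i j) ^ 2
        = ∑ i ∈ Finset.range (n+1), ∑ j ∈ Finset.range (n+1),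
            (q^2 * (B i r u * B j r v) - 2*q*(B i r u * B j r v * f i j)
              + B i r u * B j r v * (f i j)^2) :=
          Finset.sum_congr rfl fun i _ => Finset.sum_congr rfl fun j _ => by ring
      _ = q^2 * (∑ i ∈ Finset.range (n+1), ∑ j ∈ Finset.range (n+1),
              B i r u * B j r v)
          - 2*q*(∑ i ∈ Finset.range (n+1), ∑ j ∈ Finset.range (n+1),
              B i r u * B j r v * f i j)
          + ∑ i ∈ Finset.range (n+1), ∑ j ∈ Finset.range (n+1),
              B i r u * B j r v * (f i j)^2 := by
          simp only [Finset.sum_add_distrib, Finset.sum_sub_distrib, ← Finset.mul_sum]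
      _ = q^2 - 2*q*pstar + ∑ i ∈ Finset.range (n+1), ∑ j ∈ Finset.range (n+1),
              B i r u * B j r v * (f i j)^2 := by
          rw [hsum, ← hpstar]; ring
  intro p hp
  rw [key p, key pstar]
  have hps : 0 < (p - pstar)^2 := by
    have h := sub_ne_zero.mpr hp
    positivity
  nlinarith [hps]
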